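/- arXiv:math/0307138 — 3 statements merged into one kernel-verified Lean document; each statement's English description precedes it below -/
import Mathlib

section
/- Let A be a commutative ring and M a module of finite length u with a Jordan–Hölder filtration having factors T_1, …, T_u (a multiset of simple A-modules). Then for every permutation σ of {1, …, u} there exists a Jordan–Hölder filtration 0 = M_0 ⊂ M_1 ⊂ ⋯ ⊂ M_u = M with M_i/M_{i-1} ≅ T_{σ(i)} for all i. -/
/-!
Common setup: Jordan–Hölder filtrations of finite-dimensional modules, letters
(subsets of `simp A`, i.e. sets of simple finite-dimensional modules taken up to
isomorphism), words of letters, and the left/right basic opens of the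
non-commutative topology on `rep A`.
-/

namespace NCT

/-- The `i`-th factor `F (i+1) / F i` of a chain of submodules. -/
def chainFactor {A : Type} [Ring A] {M : Type} [AddCommGroup M] [Module A M]
    {u : ℕ} (F : Fin (u + 1) → Submodule A M) (i : Fin u) : Type :=
  ↥(F i.succ) ⧸ Submodule.comap (F i.succ).subtype (F i.castSucc)

noncomputable instance {A : Type} [Ring A] {M : Type} [AddCommGroup M] [Module A M]
    {u : ℕ} (F : Fin (u + 1) → Submodule A M) (i : Fin u) :
    AddCommGroup (chainFactor F i) :=
  inferInstanceAs (AddCommGroup (↥(F i.succ) ⧸ Submodule.comap (F i.succ).subtype (F i.castSucc)))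

noncomputable instance {A : Type} [Ring A] {M : Type} [AddCommGroup M] [Module A M]
    {u : ℕ} (F : Fin (u + 1) → Submodule A M) (i : Fin u) :
    Module A (chainFactor F i) :=
  inferInstanceAs (Module A (↥(F i.succ) ⧸ Submodule.comap (F i.succ).subtype (F i.castSucc)))

/-- A Jordan–Hölder filtration: `0 = M₀ ⊆ M₁ ⊆ ⋯ ⊆ M_u = M` with all successive
factors simple (simplicity of the factors forces the inclusions to be strict). -/
def IsJHFiltration {A : Type} [Ring A] {M : Type} [AddCommGroup M] [Module A M]
    {u : ℕ} (F : Fin (u + 1) → Submodule A M) : Prop :=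
  Monotone F ∧ F 0 = ⊥ ∧ F (Fin.last u) = ⊤ ∧
    ∀ i : Fin u, IsSimpleModule A (chainFactor F i)

/-- Membership of a module `N` in a letter `V` (letters are sets of modules,
membership is taken up to isomorphism, so a letter is a subset of `simp A`). -/
def MemLetter {A : Type} [Ring A] (V : Set (ModuleCat.{0} A)) (N : Type)
    [AddCommGroup N] [Module A N] : Prop :=
  ∃ P ∈ V, Nonempty (N ≃ₗ[A] P)

/-- `rep A`: the finite-dimensional (over `k`) `A`-modules. -/
def FDRep (k A : Type) [Field k] [Ring A] [Algebra k A] : Set (ModuleCat.{0} A) :=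
  {M | Module.Finite k (RestrictScalars k A M)}

/-- `simp A`: the simple finite-dimensional `A`-modules. -/
def SimpFD (k A : Type) [Field k] [Ring A] [Algebra k A] : Set (ModuleCat.{0} A) :=
  {M | IsSimpleModule A M ∧ Module.Finite k (RestrictScalars k A M)}

/-- A word of letters. -/
abbrev Word (A : Type) [Ring A] := List (Set (ModuleCat.{0} A))

/-- The left basic open `𝒪^l_w`: finite-dimensional modules admitting a Jordan–Hölder
filtration of length `u ≥ |w|` whose first `|w|` factors lie, in order, in the letters of `w`. -/
def leftOpen (k A : Type) [Field k] [Ring A] [Algebra k A] (w : Word A) :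
    Set (ModuleCat.{0} A) :=
  {M | M ∈ FDRep k A ∧ ∃ (u : ℕ) (F : Fin (u + 1) → Submodule A M) (hu : w.length ≤ u),
    IsJHFiltration F ∧
    ∀ i : Fin w.length, MemLetter (w.get i) (chainFactor F (Fin.castLE hu i))}

/-- The right basic open `𝒪^r_w`: finite-dimensional modules admitting a Jordan–Hölder
filtration of length `u ≥ |w|` whose top `|w|` factors match `w` in order. -/
def rightOpen (k A : Type) [Field k] [Ring A] [Algebra k A] (w : Word A) :
    Set (ModuleCat.{0} A) :=
  {M | M ∈ FDRep k A ∧ ∃ (u : ℕ) (F : Fin (u + 1) → Submodule A M) (hu : w.length ≤ u),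
    IsJHFiltration F ∧
    ∀ i : Fin w.length,
      MemLetter (w.get i) (chainFactor F ⟨u - w.length + i.1, by have := i.isLt; omega⟩)}

/-- `rep(m)` for a multiset of letters `m`: modules with a Jordan–Hölder filtration whose
factors can be matched, by distinct indices, to the occurrences of letters in `m`,
each matched factor lying in its letter. -/
def RepMS (k A : Type) [Field k] [Ring A] [Algebra k A]
    (m : Multiset (Set (ModuleCat.{0} A))) : Set (ModuleCat.{0} A) :=
  {M | M ∈ FDRep k A ∧ ∃ (u : ℕ) (F : Fin (u + 1) → Submodule A M),
    IsJHFiltration F ∧ ∃ (l : Word A) (_ : (l : Multiset (Set (ModuleCat.{0} A))) = m)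
      (f : Fin l.length ↪ Fin u), ∀ j : Fin l.length, MemLetter (l.get j) (chainFactor F (f j))}

/-- The multiset `w ∪ w'`: each letter with the maximum of its multiplicities in `w`, `w'`. -/
noncomputable def wordSup {A : Type} [Ring A] (w w' : Word A) :
    Multiset (Set (ModuleCat.{0} A)) :=
  letI := Classical.decEq (Set (ModuleCat.{0} A))
  (w : Multiset (Set (ModuleCat.{0} A))) ∪ (w' : Multiset (Set (ModuleCat.{0} A)))

/-- `𝒪^l_w ≤ 𝒪^l_{w'}`, i.e. `𝒪^l_w(w ∪ w') ⊆ 𝒪^l_{w'}(w ∪ w')`. -/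
def LeL (k A : Type) [Field k] [Ring A] [Algebra k A] (w w' : Word A) : Prop :=
  leftOpen k A w ∩ RepMS k A (wordSup w w') ⊆ leftOpen k A w' ∩ RepMS k A (wordSup w w')

/-- `𝒪^l_w ≈ 𝒪^l_{w'}`, i.e. `𝒪^l_w(w ∪ w') = 𝒪^l_{w'}(w ∪ w')`. -/
def EquivL (k A : Type) [Field k] [Ring A] [Algebra k A] (w w' : Word A) : Prop :=
  leftOpen k A w ∩ RepMS k A (wordSup w w') = leftOpen k A w' ∩ RepMS k A (wordSup w w')

/-- `𝒪^r_w ≤ 𝒪^r_{w'}`. -/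
def LeR (k A : Type) [Field k] [Ring A] [Algebra k A] (w w' : Word A) : Prop :=
  rightOpen k A w ∩ RepMS k A (wordSup w w') ⊆ rightOpen k A w' ∩ RepMS k A (wordSup w w')

/-- `𝒪^r_w ≈ 𝒪^r_{w'}`. -/
def EquivR (k A : Type) [Field k] [Ring A] [Algebra k A] (w w' : Word A) : Prop :=
  rightOpen k A w ∩ RepMS k A (wordSup w w') = rightOpen k A w' ∩ RepMS k A (wordSup w w')

section SwapLemma
variable {R : Type} [CommRing R]


theorem simpleEquivQuotAnn (M : Type) [AddCommGroup M] [Module R M]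
    [IsSimpleModule R M] : Nonempty (M ≃ₗ[R] R ⧸ Module.annihilator R M) := by
  have := IsSimpleModule.nontrivial R M
  obtain ⟨m, hm⟩ := exists_ne (0 : M)
  have hker : LinearMap.ker (LinearMap.toSpanSingleton R M m) = Module.annihilator R M := by
    apply le_antisymm
    · intro r hr
      rw [Module.mem_annihilator]
      intro x
      obtain ⟨s, rfl⟩ := IsSimpleModule.toSpanSingleton_surjective R hm x
      have h0 : r • m = 0 := LinearMap.mem_ker.mp hr
      simp only [LinearMap.toSpanSingleton_apply]
      rw [smul_comm, h0, smul_zero]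
    · intro r hr
      simp [LinearMap.mem_ker, Module.mem_annihilator.mp hr]
  rw [← hker]
  exact ⟨(LinearMap.quotKerEquivOfSurjective _
    (IsSimpleModule.toSpanSingleton_surjective R hm)).symm⟩

/-- Simple modules over a commutative ring with equal annihilators are isomorphic. -/
theorem simple_equiv_of_ann_eq (M N : Type) [AddCommGroup M] [Module R M]
    [AddCommGroup N] [Module R N] [IsSimpleModule R M] [IsSimpleModule R N]
    (h : Module.annihilator R M = Module.annihilator R N) : Nonempty (M ≃ₗ[R] N) := by
  obtain ⟨e⟩ := simpleEquivQuotAnn (R := R) M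
  obtain ⟨f⟩ := simpleEquivQuotAnn (R := R) N
  rw [h] at e
  exact ⟨e.trans f.symm⟩

theorem nontrivial_subsingleton_false {X : Type*} (h1 : Nontrivial X) (h2 : Subsingleton X) :
    False := by
  obtain ⟨a, b, hab⟩ := h1
  exact hab (Subsingleton.elim a b)

theorem exists_swap_submodule (N : Type) [AddCommGroup N] [Module R N] (P : Submodule R N)
    (hP : IsSimpleModule R P) (hQ : IsSimpleModule R (N ⧸ P)) :
    ∃ Q : Submodule R N, Nonempty (↥Q ≃ₗ[R] N ⧸ P) ∧ Nonempty ((N ⧸ Q) ≃ₗ[R] ↥P) := by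
  by_cases hiso : Nonempty (↥P ≃ₗ[R] N ⧸ P)
  · exact ⟨P, hiso, ⟨hiso.some.symm⟩⟩
  have hmaxP : (Module.annihilator R ↥P).IsMaximal := IsSimpleModule.annihilator_isMaximal
  have hmaxQ : (Module.annihilator R (N ⧸ P)).IsMaximal := IsSimpleModule.annihilator_isMaximal
  have hne : ¬ (Module.annihilator R (N ⧸ P) ≤ Module.annihilator R ↥P) := by
    intro hle
    have : Module.annihilator R (N ⧸ P) = Module.annihilator R ↥P :=
      hmaxQ.eq_of_le hmaxP.ne_top hle
    exact hiso (simple_equiv_of_ann_eq _ _ this.symm)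
  obtain ⟨a, ha', haP'⟩ := Set.not_subset.mp hne
  have ha : a ∈ Module.annihilator R (N ⧸ P) := ha'
  have haP : a ∉ Module.annihilator R ↥P := haP'
  have hland : ∀ x : N, a • x ∈ P := by
    intro x
    have : a • (Submodule.Quotient.mk (p := P) x) = 0 := Module.mem_annihilator.mp ha _
    rwa [← Submodule.Quotient.mk_smul, Submodule.Quotient.mk_eq_zero] at this
  set ψ : N →ₗ[R] ↥P := LinearMap.codRestrict P (a • LinearMap.id)
    (fun x => by simpa using hland x) with hψ
  have hψapp : ∀ x : N, (ψ x : N) = a • x := fun x => rfl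
  -- a acts injectively on P
  have hinjP : ∀ p : N, p ∈ P → a • p = 0 → p = 0 := by
    intro p hp hap
    by_contra hp0
    set K := LinearMap.ker (a • (LinearMap.id : ↥P →ₗ[R] ↥P)) with hK
    have hmem : (⟨p, hp⟩ : ↥P) ∈ K := by
      rw [LinearMap.mem_ker]
      ext
      simpa using hap
    have hKtop : K = ⊤ := by
      rcases eq_bot_or_eq_top K with hb | ht
      · rw [hb] at hmem
        exact absurd (by simpa using congrArg Subtype.val hmem) hp0
      · exact ht
    apply haP
    rw [Module.mem_annihilator]
    intro x
    have hx : x ∈ K := hKtop ▸ trivial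
    simpa using LinearMap.mem_ker.mp hx
  have hψsurj : Function.Surjective ψ := by
    rw [← LinearMap.range_eq_top]
    rcases eq_bot_or_eq_top (LinearMap.range ψ) with hb | ht
    · exfalso
      apply haP
      rw [Module.mem_annihilator]
      rintro ⟨x, hx⟩
      have hm : ψ x ∈ LinearMap.range ψ := ⟨x, rfl⟩
      rw [hb, Submodule.mem_bot] at hm
      have h0 : a • x = 0 := by rw [← hψapp x, hm]; rfl
      ext
      simpa using h0
    · exact ht
  refine ⟨LinearMap.ker ψ, ?_, ⟨LinearMap.quotKerEquivOfSurjective ψ hψsurj⟩⟩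
  set g : ↥(LinearMap.ker ψ) →ₗ[R] N ⧸ P := P.mkQ ∘ₗ (LinearMap.ker ψ).subtype with hg
  have haq : ∀ q : N, q ∈ LinearMap.ker ψ → a • q = 0 := by
    intro q hq
    have h0 := LinearMap.mem_ker.mp hq
    rw [← hψapp q, h0]; rfl
  have hginj : Function.Injective g := by
    rw [← LinearMap.ker_eq_bot, eq_bot_iff]
    rintro ⟨q, hq⟩ hgq
    have hqP : q ∈ P := by
      have : P.mkQ q = 0 := hgq
      rwa [Submodule.mkQ_apply, Submodule.Quotient.mk_eq_zero] at this
    have : q = 0 := hinjP q hqP (haq q hq)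
    simp [this]
  have hgsurj : Function.Surjective g := by
    rw [← LinearMap.range_eq_top]
    rcases eq_bot_or_eq_top (LinearMap.range g) with hb | ht
    · exfalso
      have hker : LinearMap.ker ψ = ⊥ := by
        rw [eq_bot_iff]
        intro q hq
        have hm : g ⟨q, hq⟩ ∈ LinearMap.range g := ⟨_, rfl⟩
        rw [hb, Submodule.mem_bot] at hm
        have hqP : q ∈ P := by
          have h0 : P.mkQ q = 0 := hm
          rwa [Submodule.mkQ_apply, Submodule.Quotient.mk_eq_zero] at h0
        simpa using hinjP q hqP (haq q hq)
      have hbij : Function.Bijective ψ := ⟨LinearMap.ker_eq_bot.mp hker, hψsurj⟩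
      have hNsimple : IsSimpleModule R N :=
        IsSimpleModule.congr (LinearEquiv.ofBijective ψ hbij)
      rcases eq_bot_or_eq_top P with h | h
      · have hnt := hP.nontrivial
        rw [h] at hnt
        exact nontrivial_subsingleton_false hnt inferInstance
      · have hnt := hQ.nontrivial
        have hs : Subsingleton (N ⧸ P) :=
          Submodule.Quotient.subsingleton_iff.mpr h
        exact nontrivial_subsingleton_false hnt hs
    · exact ht
  exact ⟨LinearEquiv.ofBijective g ⟨hginj, hgsurj⟩⟩

end SwapLemma

theorem quotCongr {A : Type} [Ring A] {M : Type} [AddCommGroup M] [Module A M]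
    {p q p' q' : Submodule A M} (h1 : p = p') (h2 : q = q') :
    Nonempty ((↥p ⧸ Submodule.comap p.subtype q) ≃ₗ[A] (↥p' ⧸ Submodule.comap p'.subtype q')) := by
  subst h1; subst h2; exact ⟨LinearEquiv.refl _ _⟩

theorem factorEquivMap {A : Type} [Ring A] {M : Type} [AddCommGroup M] [Module A M]
    (N₀ N₂ X : Submodule A M) (h0X : N₀ ≤ X) (hX2 : X ≤ N₂) :
    Nonempty ((↥X ⧸ Submodule.comap X.subtype N₀) ≃ₗ[A]
      ↥(Submodule.map (Submodule.comap N₂.subtype N₀).mkQ (Submodule.comap N₂.subtype X))) := by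
  set f : ↥X →ₗ[A] (↥N₂ ⧸ Submodule.comap N₂.subtype N₀) :=
    (Submodule.comap N₂.subtype N₀).mkQ ∘ₗ Submodule.inclusion hX2 with hf
  have hker : LinearMap.ker f = Submodule.comap X.subtype N₀ := by
    ext x
    simp only [LinearMap.mem_ker, hf, LinearMap.comp_apply, Submodule.mkQ_apply,
      Submodule.Quotient.mk_eq_zero, Submodule.mem_comap, Submodule.coe_inclusion,
      Submodule.coe_subtype]
  have hrange : LinearMap.range f =
      Submodule.map (Submodule.comap N₂.subtype N₀).mkQ (Submodule.comap N₂.subtype X) := by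
    rw [hf, LinearMap.range_comp, Submodule.range_inclusion]
  exact ⟨(Submodule.quotEquivOfEq _ _ hker.symm).trans
    ((LinearMap.quotKerEquivRange f).trans (LinearEquiv.ofEq _ _ hrange))⟩

theorem swap_step {A : Type} [CommRing A] {M : Type} [AddCommGroup M] [Module A M] {u : ℕ}
    (F : Fin (u + 1) → Submodule A M) (hF : IsJHFiltration F) (j : ℕ) (hj : j + 1 < u) :
    ∃ G : Fin (u + 1) → Submodule A M, IsJHFiltration G ∧
      Nonempty (chainFactor G ⟨j, by omega⟩ ≃ₗ[A] chainFactor F ⟨j + 1, hj⟩) ∧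
      Nonempty (chainFactor G ⟨j + 1, hj⟩ ≃ₗ[A] chainFactor F ⟨j, by omega⟩) ∧
      ∀ i : Fin u, i.1 ≠ j → i.1 ≠ j + 1 →
        Nonempty (chainFactor G i ≃ₗ[A] chainFactor F i) := by
  obtain ⟨hmono, hbot, htop, hsimp⟩ := hF
  set jj : Fin u := ⟨j, by omega⟩ with hjj
  set jj1 : Fin u := ⟨j + 1, hj⟩ with hjj1
  by_cases hiso : Nonempty (chainFactor F jj ≃ₗ[A] chainFactor F jj1)
  · exact ⟨F, ⟨hmono, hbot, htop, hsimp⟩, hiso, ⟨hiso.some.symm⟩,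
      fun i _ _ => ⟨LinearEquiv.refl _ _⟩⟩
  set i0 : Fin (u + 1) := ⟨j, by omega⟩ with hi0
  set i1 : Fin (u + 1) := ⟨j + 1, by omega⟩ with hi1
  set i2 : Fin (u + 1) := ⟨j + 2, by omega⟩ with hi2
  have h01 : F i0 ≤ F i1 := hmono (by simp [hi0, hi1, Fin.le_def])
  have h12 : F i1 ≤ F i2 := hmono (by simp [hi1, hi2, Fin.le_def])
  have h02 : F i0 ≤ F i2 := h01.trans h12
  set P₀ : Submodule A ↥(F i2) := Submodule.comap (F i2).subtype (F i0) with hP₀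
  set P₁ : Submodule A ↥(F i2) := Submodule.comap (F i2).subtype (F i1) with hP₁
  have hP01 : P₀ ≤ P₁ := Submodule.comap_mono h01
  set P : Submodule A (↥(F i2) ⧸ P₀) := Submodule.map P₀.mkQ P₁ with hP
  have eTop : Nonempty (((↥(F i2) ⧸ P₀) ⧸ P) ≃ₗ[A] chainFactor F jj1) :=
    ⟨Submodule.quotientQuotientEquivQuotient P₀ P₁ hP01⟩
  have eMid : Nonempty ((chainFactor F jj) ≃ₗ[A] ↥P) :=
    factorEquivMap (F i0) (F i2) (F i1) h01 h12
  haveI hs_j := hsimp jj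
  haveI hs_j1 := hsimp jj1
  have hsP : IsSimpleModule A ↥P := IsSimpleModule.congr eMid.some.symm
  have hsVP : IsSimpleModule A ((↥(F i2) ⧸ P₀) ⧸ P) := IsSimpleModule.congr eTop.some
  obtain ⟨Q, ⟨eQ⟩, ⟨eVQ⟩⟩ := exists_swap_submodule _ P hsP hsVP
  set Q' : Submodule A ↥(F i2) := Submodule.comap P₀.mkQ Q with hQ'
  have hP0Q' : P₀ ≤ Q' := by
    intro x hx
    have h0 : P₀.mkQ x = 0 := (Submodule.Quotient.mk_eq_zero _).mpr hx
    simp only [hQ', Submodule.mem_comap, h0, Submodule.zero_mem]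
  have hmapQ' : Submodule.map P₀.mkQ Q' = Q :=
    Submodule.map_comap_eq_of_surjective (Submodule.mkQ_surjective P₀) Q
  set Q'' : Submodule A M := Submodule.map (F i2).subtype Q' with hQ''
  have hQ''2 : Q'' ≤ F i2 := Submodule.map_subtype_le _ _
  have h0Q'' : F i0 ≤ Q'' := by
    intro x hx
    exact ⟨⟨x, h02 hx⟩, hP0Q' (by simpa [hP₀] using hx), rfl⟩
  have hcomapQ'' : Submodule.comap (F i2).subtype Q'' = Q' := by
    rw [hQ'', Submodule.comap_map_eq, Submodule.ker_subtype, sup_bot_eq]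
  classical
  set G : Fin (u + 1) → Submodule A M := Function.update F i1 Q'' with hG
  have hGi1 : G i1 = Q'' := Function.update_self _ _ _
  have hGne : ∀ i, i ≠ i1 → G i = F i := fun i h => Function.update_of_ne h _ _
  have h0ne : (0 : Fin (u + 1)) ≠ i1 := Fin.ne_of_val_ne (by simp [hi1])
  have hlastne : Fin.last u ≠ i1 := Fin.ne_of_val_ne (by simp [hi1]; omega)
  have hi0ne : i0 ≠ i1 := Fin.ne_of_val_ne (by simp [hi0, hi1])
  have hi2ne : i2 ≠ i1 := Fin.ne_of_val_ne (by simp [hi2, hi1])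
  have eGj : Nonempty (chainFactor G jj ≃ₗ[A] chainFactor F jj1) := by
    have e1 : Nonempty ((↥(G jj.succ) ⧸ Submodule.comap (G jj.succ).subtype (G jj.castSucc))
        ≃ₗ[A] (↥Q'' ⧸ Submodule.comap Q''.subtype (F i0))) :=
      quotCongr (show G jj.succ = Q'' from hGi1) (show G jj.castSucc = F i0 from hGne i0 hi0ne)
    obtain ⟨e2⟩ := factorEquivMap (F i0) (F i2) Q'' h0Q'' hQ''2
    have hQeq : Submodule.map P₀.mkQ (Submodule.comap (F i2).subtype Q'') = Q := by
      rw [hcomapQ'', hmapQ']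
    exact ⟨e1.some.trans (e2.trans ((LinearEquiv.ofEq _ _ hQeq).trans
      (eQ.trans eTop.some)))⟩
  have eGj1 : Nonempty (chainFactor G jj1 ≃ₗ[A] chainFactor F jj) := by
    have e1 : Nonempty ((↥(G jj1.succ) ⧸ Submodule.comap (G jj1.succ).subtype (G jj1.castSucc))
        ≃ₗ[A] (↥(F i2) ⧸ Submodule.comap (F i2).subtype Q'')) :=
      quotCongr (show G jj1.succ = F i2 from hGne i2 hi2ne)
        (show G jj1.castSucc = Q'' from hGi1)
    have e2 : (↥(F i2) ⧸ Submodule.comap (F i2).subtype Q'') ≃ₗ[A] (↥(F i2) ⧸ Q') :=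
      Submodule.quotEquivOfEq _ _ hcomapQ''
    have e3 : ((↥(F i2) ⧸ P₀) ⧸ Submodule.map P₀.mkQ Q') ≃ₗ[A] (↥(F i2) ⧸ Q') :=
      Submodule.quotientQuotientEquivQuotient P₀ Q' hP0Q'
    have e4 : ((↥(F i2) ⧸ P₀) ⧸ Submodule.map P₀.mkQ Q') ≃ₗ[A] ((↥(F i2) ⧸ P₀) ⧸ Q) :=
      Submodule.quotEquivOfEq _ _ hmapQ'
    exact ⟨e1.some.trans (e2.trans (e3.symm.trans (e4.symm.symm.trans
      (eVQ.trans eMid.some.symm))))⟩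
  have eGother : ∀ i : Fin u, i.1 ≠ j → i.1 ≠ j + 1 →
      Nonempty (chainFactor G i ≃ₗ[A] chainFactor F i) := by
    intro i h1 h2
    have hs : i.succ ≠ i1 := Fin.ne_of_val_ne (by simp [hi1]; omega)
    have hc : i.castSucc ≠ i1 := Fin.ne_of_val_ne (by simp [hi1]; omega)
    exact quotCongr (hGne _ hs) (hGne _ hc)
  refine ⟨G, ⟨?_, ?_, ?_, ?_⟩, eGj, eGj1, eGother⟩
  · rw [Fin.monotone_iff_le_succ]
    intro k
    rcases eq_or_ne k.1 j with hk | hk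
    · have hcs : k.castSucc ≠ i1 := Fin.ne_of_val_ne (by simp [hi1]; omega)
      have hss : k.succ = i1 := Fin.ext (by simp [hi1]; omega)
      have hcs0 : k.castSucc = i0 := Fin.ext (by simp [hi0]; omega)
      rw [hGne _ hcs, hss, hGi1, hcs0]
      exact h0Q''
    rcases eq_or_ne k.1 (j + 1) with hk1 | hk1
    · have hcs : k.castSucc = i1 := Fin.ext (by simp [hi1]; omega)
      have hss : k.succ ≠ i1 := Fin.ne_of_val_ne (by simp [hi1]; omega)
      have hss2 : k.succ = i2 := Fin.ext (by simp [hi2]; omega)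
      rw [hcs, hGi1, hGne _ hss, hss2]
      exact hQ''2
    · have hcs : k.castSucc ≠ i1 := Fin.ne_of_val_ne (by simp [hi1]; omega)
      have hss : k.succ ≠ i1 := Fin.ne_of_val_ne (by simp [hi1]; omega)
      rw [hGne _ hcs, hGne _ hss]
      exact hmono (Fin.castSucc_le_succ k)
  · rw [hGne _ h0ne]; exact hbot
  · rw [hGne _ hlastne]; exact htop
  · intro i
    haveI := hsimp i
    rcases eq_or_ne i.1 j with hk | hk
    · rw [show i = jj from Fin.ext hk]
      exact IsSimpleModule.congr eGj.some
    rcases eq_or_ne i.1 (j + 1) with hk1 | hk1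
    · rw [show i = jj1 from Fin.ext hk1]
      exact IsSimpleModule.congr eGj1.some
    · exact IsSimpleModule.congr (eGother i hk hk1).some


/-- Over a commutative ring, the factors of a Jordan–Hölder filtration
can be realized in any prescribed order: if `M` has a Jordan–Hölder filtration of length
`u` with factors `T₁, …, T_u`, then for every permutation `σ` of the indices there is a
Jordan–Hölder filtration of `M` whose `i`-th factor is isomorphic to `T_{σ(i)}`. -/
theorem jh_filtration_perm (A : Type) [CommRing A]
    (M : Type) [AddCommGroup M] [Module A M] (u : ℕ)
    (T : Fin u → Type) [∀ i, AddCommGroup (T i)] [∀ i, Module A (T i)]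
    (F : Fin (u + 1) → Submodule A M) (hF : IsJHFiltration F)
    (hT : ∀ i : Fin u, Nonempty (chainFactor F i ≃ₗ[A] T i))
    (σ : Equiv.Perm (Fin u)) :
    ∃ G : Fin (u + 1) → Submodule A M, IsJHFiltration G ∧
      ∀ i : Fin u, Nonempty (chainFactor G i ≃ₗ[A] T (σ i)) := by
  classical
  have key : ∀ σ' : Equiv.Perm (Fin u), ∀ F' : Fin (u + 1) → Submodule A M, IsJHFiltration F' →
      ∃ G : Fin (u + 1) → Submodule A M, IsJHFiltration G ∧
        ∀ i : Fin u, Nonempty (chainFactor G i ≃ₗ[A] chainFactor F' (σ' i)) := by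
    set Pr : Equiv.Perm (Fin u) → Prop := fun σ' =>
      ∀ F' : Fin (u + 1) → Submodule A M, IsJHFiltration F' →
        ∃ G : Fin (u + 1) → Submodule A M, IsJHFiltration G ∧
          ∀ i : Fin u, Nonempty (chainFactor G i ≃ₗ[A] chainFactor F' (σ' i)) with hPr
    have hP1 : Pr 1 := fun F' hF' => ⟨F', hF', fun i => ⟨LinearEquiv.refl _ _⟩⟩
    have hPmul : ∀ σ' τ, Pr σ' → Pr τ → Pr (σ' * τ) := by
      intro σ' τ hσ hτ F' hF'
      obtain ⟨G, hG, hGe⟩ := hσ F' hF'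
      obtain ⟨H, hH, hHe⟩ := hτ G hG
      exact ⟨H, hH, fun i => ⟨(hHe i).some.trans (hGe (τ i)).some⟩⟩
    have hPadj : ∀ (j : ℕ) (hj : j + 1 < u),
        Pr (Equiv.swap ⟨j, by omega⟩ ⟨j + 1, hj⟩) := by
      intro j hj F' hF'
      obtain ⟨G, hG, e1, e2, e3⟩ := swap_step F' hF' j hj
      refine ⟨G, hG, fun i => ?_⟩
      rcases eq_or_ne i (⟨j, by omega⟩ : Fin u) with rfl | h1
      · rw [Equiv.swap_apply_left]; exact e1
      rcases eq_or_ne i (⟨j + 1, hj⟩ : Fin u) with rfl | h2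
      · rw [Equiv.swap_apply_right]; exact e2
      · rw [Equiv.swap_apply_of_ne_of_ne h1 h2]
        exact e3 i (fun h => h1 (Fin.ext h)) (fun h => h2 (Fin.ext h))
    have hswapd : ∀ d (x y : Fin u), x.1 < y.1 → y.1 - x.1 ≤ d → Pr (Equiv.swap x y) := by
      intro d
      induction d with
      | zero => intro x y h hle; omega
      | succ d ih =>
        intro x y h hle
        by_cases hadj : y.1 = x.1 + 1
        · have hx1u : x.1 + 1 < u := hadj ▸ y.isLt
          have hx : x = ⟨x.1, x.isLt⟩ := rfl
          have hy : y = ⟨x.1 + 1, hx1u⟩ := Fin.ext hadj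
          rw [hx, hy]
          exact hPadj x.1 hx1u
        · set z : Fin u := ⟨y.1 - 1, by omega⟩ with hz
          have hxz : x ≠ z := Fin.ne_of_val_ne (by simp [hz]; omega)
          have hxy : x ≠ y := Fin.ne_of_val_ne (by omega)
          have Ps : Pr (Equiv.swap z y) := ih z y (by simp [hz]; omega) (by simp [hz]; omega)
          have Pt : Pr (Equiv.swap x z) := ih x z (by simp [hz]; omega) (by simp [hz]; omega)
          have hid : Equiv.swap x y =
              Equiv.swap z y * Equiv.swap x z * Equiv.swap z y := by
            have h1 : Equiv.swap x y =
                Equiv.swap ((Equiv.swap z y) x) ((Equiv.swap z y) z) := by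
              rw [Equiv.swap_apply_of_ne_of_ne hxz hxy, Equiv.swap_apply_left]
            rw [h1, Equiv.swap_apply_apply, Equiv.swap_inv]
          rw [hid]
          exact hPmul _ _ (hPmul _ _ Ps Pt) Ps
    have hPswap : ∀ x y : Fin u, x ≠ y → Pr (Equiv.swap x y) := by
      intro x y hxy
      rcases lt_or_gt_of_ne (fun h : x.1 = y.1 => hxy (Fin.ext h)) with h | h
      · exact hswapd (y.1 - x.1) x y h le_rfl
      · rw [Equiv.swap_comm]
        exact hswapd (x.1 - y.1) y x h le_rfl
    intro σ'
    exact Equiv.Perm.swap_induction_on σ' hP1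
      (fun f x y hxy hPf => hPmul _ _ (hPswap x y hxy) hPf)
  obtain ⟨G, hG, hGe⟩ := key σ F hF
  exact ⟨G, hG, fun i => ⟨(hGe i).some.trans (hT (σ i)).some⟩⟩

end NCT
end

section
/- Let A be a k-algebra and let S and T be non-isomorphic finite-dimensional simple A-modules. Suppose 0 → S → X → T → 0 is a non-split short exact sequence of A-modules. Then X has no submodule isomorphic to T; consequently every Jordan–Hölder filtration of X has bottom factor isomorphic to S and top factor isomorphic to T, so that X ∈ O^l_{{S}{T}} but X ∉ O^l_{{T}{S}}, and hence O^l_{{S}} ∧ O^l_{{T}} = O^l_{{S}{T}} is not equivalent (≈) to O^l_{{T}{S}} = O^l_{{T}} ∧ O^l_{{S}}. -/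
/-!
Common setup: Jordan–Hölder filtrations of finite-dimensional modules, letters
(subsets of `simp A`, i.e. sets of simple finite-dimensional modules taken up to
isomorphism), words of letters, and the left/right basic opens of the
non-commutative topology on `rep A`.
-/

namespace NCT

/-- The letter `{S} ⊆ simp A`: the isomorphism class of the module `S`. -/
def isoClass (A : Type) [Ring A] (S : Type) [AddCommGroup S] [Module A S] :
    Set (ModuleCat.{0} A) :=
  {N | Nonempty (N ≃ₗ[A] S)}

section Aux

variable {A : Type} [Ring A] {M : Type} [AddCommGroup M] [Module A M]

/-- If the lower submodule is `⊥`, the chain factor is the upper submodule. -/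
noncomputable def bottomFactorEquiv {u : ℕ} (F : Fin (u + 1) → Submodule A M) (i : Fin u)
    (h : F i.castSucc = ⊥) : chainFactor F i ≃ₗ[A] ↥(F i.succ) :=
  Submodule.quotEquivOfEqBot _ (by rw [h, Submodule.comap_bot, Submodule.ker_subtype])

/-- If the upper submodule is `⊤`, the chain factor is the quotient by the lower one. -/
noncomputable def topFactorEquiv {u : ℕ} (F : Fin (u + 1) → Submodule A M) (i : Fin u)
    (h : F i.succ = ⊤) : chainFactor F i ≃ₗ[A] M ⧸ F i.castSucc := by
  let φ : ↥(F i.succ) →ₗ[A] M ⧸ F i.castSucc := (F i.castSucc).mkQ ∘ₗ (F i.succ).subtype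
  have hker : Submodule.comap (F i.succ).subtype (F i.castSucc) = LinearMap.ker φ := by
    rw [LinearMap.ker_comp, Submodule.ker_mkQ]
  have hsurj : Function.Surjective φ := by
    intro y
    obtain ⟨x, rfl⟩ := (F i.castSucc).mkQ_surjective y
    exact ⟨⟨x, h ▸ Submodule.mem_top⟩, rfl⟩
  exact (Submodule.quotEquivOfEq _ _ hker).trans (φ.quotKerEquivOfSurjective hsurj)

end Aux

/-- If `0 → S → X → T → 0` is a non-split short exact sequence with
`S`, `T` non-isomorphic finite-dimensional simples, then `X` has no submodule isomorphic
to `T`; every Jordan–Hölder filtration of `X` has bottom factor `S` and top factor `T`;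
hence `X ∈ 𝒪^l_{{S}{T}}`, `X ∉ 𝒪^l_{{T}{S}}`, and
`𝒪^l_{{S}} ∧ 𝒪^l_{{T}} = 𝒪^l_{{S}{T}} ≉ 𝒪^l_{{T}{S}} = 𝒪^l_{{T}} ∧ 𝒪^l_{{S}}`. -/
theorem nonsplit_extension_noncommutative (k : Type) [Field k] [IsAlgClosed k]
    (A : Type) [Ring A] [Algebra k A]
    (S T : Type) [AddCommGroup S] [Module A S] [AddCommGroup T] [Module A T]
    [Module k S] [IsScalarTower k A S] [FiniteDimensional k S]
    [Module k T] [IsScalarTower k A T] [FiniteDimensional k T]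
    (hS : IsSimpleModule A S) (hT : IsSimpleModule A T)
    (hST : IsEmpty (S ≃ₗ[A] T))
    (X : Type) [AddCommGroup X] [Module A X]
    (f : S →ₗ[A] X) (g : X →ₗ[A] T)
    (hf : Function.Injective f) (hg : Function.Surjective g)
    (hfg : LinearMap.range f = LinearMap.ker g)
    (hnonsplit : ¬ ∃ h : T →ₗ[A] X, g ∘ₗ h = LinearMap.id) :
    (∀ N : Submodule A X, IsEmpty (N ≃ₗ[A] T)) ∧
    (∀ (u : ℕ) (F : Fin (u + 1) → Submodule A X), IsJHFiltration F →
      ∃ hu : 0 < u, Nonempty (chainFactor F ⟨0, hu⟩ ≃ₗ[A] S) ∧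
        Nonempty (chainFactor F ⟨u - 1, by omega⟩ ≃ₗ[A] T)) ∧
    ModuleCat.of A X ∈ leftOpen k A [isoClass A S, isoClass A T] ∧
    ModuleCat.of A X ∉ leftOpen k A [isoClass A T, isoClass A S] ∧
    ¬ EquivL k A [isoClass A S, isoClass A T] [isoClass A T, isoClass A S] := by
  classical
  haveI := hS
  haveI := hT
  haveI hSnt : Nontrivial S := IsSimpleModule.nontrivial A S
  haveI hTnt : Nontrivial T := IsSimpleModule.nontrivial A T
  set R : Submodule A X := LinearMap.range f with hR
  have eS : S ≃ₗ[A] ↥R := LinearEquiv.ofInjective f hf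
  haveI hRsimple : IsSimpleModule A ↥R := IsSimpleModule.congr eS.symm
  have eT : (X ⧸ R) ≃ₗ[A] T :=
    (Submodule.quotEquivOfEq _ _ hfg).trans (g.quotKerEquivOfSurjective hg)
  have hRbot : R ≠ ⊥ := by
    intro h
    rw [hR, LinearMap.range_eq_bot] at h
    obtain ⟨x, y, hxy⟩ := hSnt
    exact hxy (hf (by rw [h]; rfl))
  have hRtop : R ≠ ⊤ := by
    intro h
    rw [hfg, LinearMap.ker_eq_top] at h
    obtain ⟨x, y, hxy⟩ := hTnt
    obtain ⟨x', rfl⟩ := hg x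
    obtain ⟨y', rfl⟩ := hg y
    exact hxy (by rw [h]; rfl)
  -- every simple submodule of `X` equals `R`
  have keySub : ∀ N : Submodule A X, IsSimpleModule A ↥N → N = R := by
    intro N hN
    haveI := hN
    haveI : Nontrivial ↥N := IsSimpleModule.nontrivial A ↥N
    set φ : ↥N →ₗ[A] T := g ∘ₗ N.subtype with hφ
    rcases eq_bot_or_eq_top (LinearMap.ker φ) with hk | hk
    · -- `φ` is injective, hence bijective, giving a splitting: contradiction
      exfalso
      have hinj : Function.Injective φ := LinearMap.ker_eq_bot.mp hk
      have hrange : LinearMap.range φ = ⊤ := by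
        rcases eq_bot_or_eq_top (LinearMap.range φ) with h | h
        · exfalso
          rw [LinearMap.range_eq_bot] at h
          obtain ⟨x, y, hxy⟩ := ‹Nontrivial ↥N›
          exact hxy (hinj (by rw [h]; rfl))
        · exact h
      set e2 : ↥N ≃ₗ[A] T :=
        LinearEquiv.ofBijective φ ⟨hinj, LinearMap.range_eq_top.mp hrange⟩ with he2
      refine hnonsplit ⟨N.subtype ∘ₗ (e2.symm : T →ₗ[A] ↥N), ?_⟩
      ext t
      have h1 : φ (e2.symm t) = t := e2.apply_symm_apply t
      simpa [hφ] using h1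
    · -- `N ≤ ker g = R`, and `R` is an atom
      have hNle : N ≤ R := by
        rw [hfg]
        intro x hx
        have : (⟨x, hx⟩ : ↥N) ∈ LinearMap.ker φ := hk ▸ Submodule.mem_top
        simpa [hφ] using this
      have hatom : IsAtom R := isSimpleModule_iff_isAtom.mp hRsimple
      have hNbot : N ≠ ⊥ := by
        intro h
        obtain ⟨x, y, hxy⟩ := ‹Nontrivial ↥N›
        apply hxy
        have hx : (x : X) ∈ (⊥ : Submodule A X) := h ▸ x.2
        have hy : (y : X) ∈ (⊥ : Submodule A X) := h ▸ y.2
        ext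
        rw [(Submodule.mem_bot A).mp hx, (Submodule.mem_bot A).mp hy]
      rcases hNle.lt_or_eq with h | h
      · exact absurd (hatom.2 _ h) hNbot
      · exact h
  -- `X` has no submodule isomorphic to `T`
  have noT : ∀ N : Submodule A X, IsEmpty (↥N ≃ₗ[A] T) := by
    intro N
    refine ⟨fun e => ?_⟩
    have hN : IsSimpleModule A ↥N := IsSimpleModule.congr e
    have hNR := keySub N hN
    exact hST.false (eS.trans ((LinearEquiv.ofEq _ _ hNR.symm).trans e))
  -- every simple quotient of `X` is by `R`
  have keyQuot : ∀ N : Submodule A X, N ≠ ⊤ → IsSimpleModule A (X ⧸ N) → N = R := by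
    intro N hNtop hQ
    haveI := hQ
    haveI : Nontrivial ↥R := IsSimpleModule.nontrivial A ↥R
    set ψ : ↥R →ₗ[A] X ⧸ N := N.mkQ ∘ₗ R.subtype with hψ
    have hkerψ : LinearMap.ker ψ = Submodule.comap R.subtype N := by
      rw [hψ, LinearMap.ker_comp, Submodule.ker_mkQ]
    rcases eq_bot_or_eq_top (LinearMap.ker ψ) with hk | hk
    · -- `R ⊓ N = ⊥`; `ψ` injective into simple quotient, so `R ⊔ N = ⊤`, so `N ≃ T`
      exfalso
      have hinj : Function.Injective ψ := LinearMap.ker_eq_bot.mp hk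
      have hrange : LinearMap.range ψ = ⊤ := by
        rcases eq_bot_or_eq_top (LinearMap.range ψ) with h | h
        · exfalso
          rw [LinearMap.range_eq_bot] at h
          obtain ⟨x, y, hxy⟩ := ‹Nontrivial ↥R›
          exact hxy (hinj (by rw [h]; rfl))
        · exact h
      -- `R ⊔ N = ⊤`
      have hsup : R ⊔ N = ⊤ := by
        rw [eq_top_iff]
        intro x _
        have : N.mkQ x ∈ LinearMap.range ψ := hrange ▸ Submodule.mem_top
        obtain ⟨⟨r, hr⟩, hrx⟩ := this
        have hsub : x - r ∈ N := by
          have h0 : N.mkQ (x - r) = 0 := by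
            rw [map_sub, show N.mkQ x = N.mkQ r from hrx.symm]
            simp
          rwa [Submodule.mkQ_apply, Submodule.Quotient.mk_eq_zero] at h0
        have hx' : x = r + (x - r) := by abel
        rw [hx']
        exact Submodule.add_mem_sup hr hsub
      -- `R ⊓ N = ⊥` (inside `N`)
      have hmeet : Submodule.comap N.subtype R = ⊥ := by
        rw [eq_bot_iff]
        rintro ⟨x, hxN⟩ hxR
        have : (⟨x, hxR⟩ : ↥R) ∈ LinearMap.ker ψ := by
          rw [hkerψ]
          exact hxN
        rw [hk] at this
        have hx0 : x = 0 := by simpa using congrArg (Submodule.subtype R) this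
        simp [hx0]
      -- `N ≃ X ⧸ R ≃ T`
      set χ : ↥N →ₗ[A] X ⧸ R := R.mkQ ∘ₗ N.subtype with hχ
      have hinjχ : Function.Injective χ := by
        rw [← LinearMap.ker_eq_bot, hχ, LinearMap.ker_comp, Submodule.ker_mkQ]
        exact hmeet
      have hsurjχ : Function.Surjective χ := by
        intro y
        obtain ⟨x, rfl⟩ := R.mkQ_surjective y
        have hx : x ∈ R ⊔ N := hsup ▸ Submodule.mem_top
        obtain ⟨r, hr, n, hn, rfl⟩ := Submodule.mem_sup.mp hx
        refine ⟨⟨n, hn⟩, ?_⟩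
        have heq : R.mkQ n = R.mkQ (r + n) := by
          rw [Submodule.mkQ_apply, Submodule.mkQ_apply, Submodule.Quotient.eq]
          simpa using hr
        simpa [hχ] using heq
      exact (noT N).false ((LinearEquiv.ofBijective χ ⟨hinjχ, hsurjχ⟩).trans eT)
    · -- `R ≤ N`, so `N/R` is a submodule of `X/R ≃ T`
      have hRle : R ≤ N := by
        intro x hx
        have : (⟨x, hx⟩ : ↥R) ∈ LinearMap.ker ψ := hk ▸ Submodule.mem_top
        rw [hkerψ] at this
        exact this
      haveI : IsSimpleModule A (X ⧸ R) := IsSimpleModule.congr eT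
      rcases eq_bot_or_eq_top (N.map R.mkQ) with h | h
      · have hle : N ≤ R := by
          intro x hx
          have : R.mkQ x = 0 := by
            have : R.mkQ x ∈ N.map R.mkQ := Submodule.mem_map_of_mem hx
            rw [h] at this
            simpa using this
          rwa [Submodule.mkQ_apply, Submodule.Quotient.mk_eq_zero] at this
        exact le_antisymm hle hRle
      · exfalso
        apply hNtop
        rw [eq_top_iff]
        intro x _
        have : R.mkQ x ∈ N.map R.mkQ := h ▸ Submodule.mem_top
        obtain ⟨n, hn, hnx⟩ := this
        have hsub : n - x ∈ R := by
          have h0 : R.mkQ (n - x) = 0 := by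
            rw [map_sub, show R.mkQ n = R.mkQ x from hnx]
            simp
          rwa [Submodule.mkQ_apply, Submodule.Quotient.mk_eq_zero] at h0
        have hx' : x = n - (n - x) := by abel
        rw [hx']
        exact Submodule.sub_mem _ hn (hRle hsub)
  -- Part 2: structure of every JH filtration
  have part2 : ∀ (u : ℕ) (F : Fin (u + 1) → Submodule A X), IsJHFiltration F →
      ∃ hu : 0 < u, Nonempty (chainFactor F ⟨0, hu⟩ ≃ₗ[A] S) ∧
        Nonempty (chainFactor F ⟨u - 1, by omega⟩ ≃ₗ[A] T) := by
    intro u F hF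
    obtain ⟨hmono, hbot, htop, hsimp⟩ := hF
    have hu : 0 < u := by
      by_contra h
      push_neg at h
      interval_cases u
      apply hRbot
      rw [eq_bot_iff, ← hbot]
      have : F (Fin.last 0) = F 0 := rfl
      rw [← this, htop]
      exact le_top
    refine ⟨hu, ?_, ?_⟩
    · -- bottom factor
      set i0 : Fin u := ⟨0, hu⟩ with hi0
      have hcast : F i0.castSucc = ⊥ := by
        have : i0.castSucc = 0 := by ext; simp [hi0]
        rw [this, hbot]
      haveI := hsimp i0
      have hFsimple : IsSimpleModule A ↥(F i0.succ) :=
        IsSimpleModule.congr (bottomFactorEquiv F i0 hcast).symm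
      have hFR := keySub _ hFsimple
      exact ⟨(bottomFactorEquiv F i0 hcast).trans
        ((LinearEquiv.ofEq _ _ hFR).trans eS.symm)⟩
    · -- top factor
      set i1 : Fin u := ⟨u - 1, by omega⟩ with hi1
      have hsucc : F i1.succ = ⊤ := by
        have : i1.succ = Fin.last u := by ext; simp [hi1, Fin.last]; omega
        rw [this, htop]
      haveI := hsimp i1
      have e5 : chainFactor F i1 ≃ₗ[A] X ⧸ F i1.castSucc := topFactorEquiv F i1 hsucc
      have hQ : IsSimpleModule A (X ⧸ F i1.castSucc) := IsSimpleModule.congr e5.symm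
      haveI := hQ
      have hne : F i1.castSucc ≠ ⊤ := by
        intro h
        haveI : Nontrivial (X ⧸ F i1.castSucc) := IsSimpleModule.nontrivial A _
        exact not_subsingleton _ (Submodule.Quotient.subsingleton_iff.mpr h)
      have hNR := keyQuot _ hne hQ
      exact ⟨e5.trans ((Submodule.quotEquivOfEq _ _ hNR).trans eT)⟩
  -- finite-dimensionality of `X`
  have hFD : ModuleCat.of A X ∈ FDRep k A := by
    show Module.Finite k (RestrictScalars k A X)
    let fk : RestrictScalars k A S →ₗ[k] RestrictScalars k A X :=
      { toFun := f
        map_add' := f.map_add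
        map_smul' := fun c x => f.map_smul (algebraMap k A c) x }
    let gk : RestrictScalars k A X →ₗ[k] RestrictScalars k A T :=
      { toFun := g
        map_add' := g.map_add
        map_smul' := fun c x => g.map_smul (algebraMap k A c) x }
    have eSk : S ≃ₗ[k] RestrictScalars k A S :=
      { AddEquiv.refl S with
        map_smul' := fun c x => (algebraMap_smul A c x).symm }
    have eTk : T ≃ₗ[k] RestrictScalars k A T :=
      { AddEquiv.refl T with
        map_smul' := fun c x => (algebraMap_smul A c x).symm }
    haveI : Module.Finite k (RestrictScalars k A S) := Module.Finite.equiv eSk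
    haveI : Module.Finite k (RestrictScalars k A T) := Module.Finite.equiv eTk
    constructor
    apply @Submodule.fg_of_fg_map_of_fg_inf_ker k (RestrictScalars k A X) (RestrictScalars k A T) _ _
      (RestrictScalars.module k A X) _ (RestrictScalars.module k A T) gk
    · show (Submodule.map gk ⊤).FG
      rw [Submodule.map_top,
        LinearMap.range_eq_top.mpr (show Function.Surjective gk from hg)]
      exact Module.Finite.fg_top
    · show (⊤ ⊓ LinearMap.ker gk).FG
      rw [top_inf_eq]
      have hmem : ∀ x : X, g x = 0 ↔ ∃ y : S, f y = x := by
        intro x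
        constructor
        · intro hx
          have hx' : x ∈ LinearMap.ker g := hx
          rw [← hfg] at hx'
          exact hx'
        · rintro ⟨y, rfl⟩
          have : f y ∈ LinearMap.ker g := hfg ▸ LinearMap.mem_range_self f y
          exact this
      have hker : LinearMap.ker gk = LinearMap.range fk := by
        ext x
        simp only [LinearMap.mem_ker, LinearMap.mem_range]
        exact hmem x
      rw [hker, LinearMap.range_eq_map]
      exact Submodule.FG.map _ Module.Finite.fg_top
  -- the standard filtration `⊥ ⊆ R ⊆ ⊤` of `X`
  set Fstd : Fin 3 → Submodule A X := ![⊥, R, ⊤] with hFstd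
  have hmono : Monotone Fstd := by
    rw [Fin.monotone_iff_le_succ]
    intro i
    fin_cases i
    · exact bot_le
    · exact le_top
  have hstd0 : Fstd (0 : Fin 2).castSucc = ⊥ := rfl
  have hstd1 : Fstd (0 : Fin 2).succ = R := rfl
  have hstd1' : Fstd (1 : Fin 2).castSucc = R := rfl
  have hstd2 : Fstd (1 : Fin 2).succ = ⊤ := rfl
  have eF0 : chainFactor Fstd 0 ≃ₗ[A] S :=
    (bottomFactorEquiv Fstd 0 hstd0).trans
      ((LinearEquiv.ofEq _ _ hstd1).trans eS.symm)
  have eF1 : chainFactor Fstd 1 ≃ₗ[A] T :=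
    (topFactorEquiv Fstd 1 hstd2).trans
      ((Submodule.quotEquivOfEq _ _ hstd1').trans eT)
  have hJH : IsJHFiltration Fstd := by
    refine ⟨hmono, rfl, rfl, ?_⟩
    intro i
    fin_cases i
    · exact IsSimpleModule.congr eF0
    · exact IsSimpleModule.congr eF1
  -- membership in the left open for `[{S},{T}]`
  have part3 : ModuleCat.of A X ∈ leftOpen k A [isoClass A S, isoClass A T] := by
    refine ⟨hFD, 2, Fstd, le_refl 2, hJH, ?_⟩
    intro i
    fin_cases i
    · exact ⟨ModuleCat.of A S, ⟨LinearEquiv.refl A S⟩, ⟨eF0⟩⟩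
    · exact ⟨ModuleCat.of A T, ⟨LinearEquiv.refl A T⟩, ⟨eF1⟩⟩
  -- non-membership in the left open for `[{T},{S}]`
  have part4 : ModuleCat.of A X ∉ leftOpen k A [isoClass A T, isoClass A S] := by
    rintro ⟨-, u, F, hu, hF, hfac⟩
    obtain ⟨hu0, ⟨e0⟩, -⟩ := part2 u F hF
    obtain ⟨P, ⟨eP⟩, ⟨eNP⟩⟩ := hfac ⟨0, by norm_num⟩
    have hidx : Fin.castLE hu (⟨0, by norm_num⟩ : Fin (List.length [isoClass A T, isoClass A S]))
        = (⟨0, hu0⟩ : Fin u) := rfl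
    rw [hidx] at eNP
    exact hST.false (e0.symm.trans (eNP.trans eP))
  -- the multiset `w ∪ w'` and membership in `rep(w ∪ w')`
  have hsup : ((([isoClass A S, isoClass A T] : Word A) : Multiset (Set (ModuleCat.{0} A))))
      = wordSup ([isoClass A S, isoClass A T] : Word A) [isoClass A T, isoClass A S] := by
    unfold wordSup
    have hperm : (([isoClass A T, isoClass A S] : Word A) : Multiset (Set (ModuleCat.{0} A)))
        = (([isoClass A S, isoClass A T] : Word A) : Multiset (Set (ModuleCat.{0} A))) :=
      Quot.sound (List.Perm.swap _ _ _)
    rw [hperm, Multiset.eq_union_left le_rfl]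
  have hRep : ModuleCat.of A X ∈
      RepMS k A (wordSup ([isoClass A S, isoClass A T] : Word A)
        [isoClass A T, isoClass A S]) := by
    refine ⟨hFD, 2, Fstd, hJH, [isoClass A S, isoClass A T], hsup,
      Function.Embedding.refl (Fin 2), ?_⟩
    intro j
    fin_cases j
    · exact ⟨ModuleCat.of A S, ⟨LinearEquiv.refl A S⟩, ⟨eF0⟩⟩
    · exact ⟨ModuleCat.of A T, ⟨LinearEquiv.refl A T⟩, ⟨eF1⟩⟩
  refine ⟨?_, part2, part3, part4, ?_⟩
  · intro N
    exact noT N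
  · intro h
    unfold EquivL at h
    have hmem : ModuleCat.of A X ∈
        leftOpen k A [isoClass A T, isoClass A S] ∩
          RepMS k A (wordSup ([isoClass A S, isoClass A T] : Word A)
            [isoClass A T, isoClass A S]) := by
      rw [← h]
      exact ⟨part3, hRep⟩
    have : wordSup ([isoClass A T, isoClass A S] : Word A) [isoClass A S, isoClass A T]
        = wordSup ([isoClass A S, isoClass A T] : Word A) [isoClass A T, isoClass A S] := by
      unfold wordSup
      exact Multiset.union_comm _ _
    exact part4 hmem.1

end NCT
end

section
/- Let M be a finite-dimensional semisimple A-module and let w = V_1 ⋯ V_k be a word of letters. If w' = V_{σ(1)} ⋯ V_{σ(k)} for some permutation σ of {1, …, k}, then M ∈ O^l_w if and only if M ∈ O^l_{w'}; likewise M ∈ O^r_w if and only if M ∈ O^r_{w'}. (Hence the non-commutative topology induced on semisimple representations is commutative.) -/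
/-!
Common setup: Jordan–Hölder filtrations of finite-dimensional modules, letters
(subsets of `simp A`, i.e. sets of simple finite-dimensional modules taken up to
isomorphism), words of letters, and the left/right basic opens of the
non-commutative topology on `rep A`.
-/

namespace NCT

section Aux

variable {A : Type} [Ring A] {M : Type} [AddCommGroup M] [Module A M]

lemma quotIso {C D N : Submodule A M} (hinf : C ⊓ D = ⊥) (hsup : C ⊔ D = N) :
    Nonempty ((↥N ⧸ Submodule.comap N.subtype D) ≃ₗ[A] ↥C) := by
  subst hsup
  exact ⟨(LinearMap.quotientInfEquivSupQuotient C D).symm.trans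
    (Submodule.quotEquivOfEqBot _ (by rw [← Submodule.comap_inf, hinf, Submodule.comap_bot, Submodule.ker_subtype]))⟩

lemma compl_exists (h : IsSemisimpleModule A M) {D N : Submodule A M} (hDN : D ≤ N) :
    ∃ C : Submodule A M, C ⊓ D = ⊥ ∧ C ⊔ D = N := by
  obtain ⟨c, hc⟩ := exists_isCompl D
  refine ⟨c ⊓ N, ?_, ?_⟩
  · rw [inf_assoc, inf_eq_right.mpr hDN, inf_comm]
    exact hc.disjoint.eq_bot
  · rw [sup_comm, ← sup_inf_assoc_of_le _ hDN, hc.codisjoint.eq_top, top_inf_eq]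

lemma disjoint_finsetSup {u : ℕ} (F : Fin (u+1) → Submodule A M) (hmono : Monotone F)
    (C : Fin u → Submodule A M) (hle : ∀ i, C i ≤ F i.succ)
    (hdis : ∀ i, C i ⊓ F i.castSucc = ⊥) :
    ∀ (t : Finset (Fin u)) (i : Fin u), i ∉ t → C i ⊓ t.sup C = ⊥ := by
  have bound : ∀ (s : Finset (Fin u)) (b : Fin (u+1)), (∀ l ∈ s, (l : ℕ) < (b : ℕ)) →
      s.sup C ≤ F b := by
    intro s b hb
    refine Finset.sup_le fun l hl => le_trans (hle l) (hmono ?_)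
    have := hb l hl
    rw [Fin.le_def]
    simpa using this
  intro t
  induction t using Finset.strongInduction with
  | _ t ih =>
    intro i hi
    rcases t.eq_empty_or_nonempty with rfl | hne
    · simp
    set m := t.max' hne with hm
    have hmem : m ∈ t := t.max'_mem hne
    rcases lt_or_ge (i : ℕ) (m : ℕ) with him | hmi
    · have ht : t = insert m (t.erase m) := (Finset.insert_erase hmem).symm
      have h1 : (t.erase m).sup C ≤ F m.castSucc := by
        apply bound
        intro l hl
        have hlm : l ≠ m := Finset.ne_of_mem_erase hl
        have hle' : l ≤ m := t.le_max' l (Finset.mem_of_mem_erase hl)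
        rw [Fin.le_def] at hle'
        have : (l : ℕ) ≠ (m : ℕ) := fun h => hlm (Fin.ext h)
        simpa using by omega
      have h2 : C i ≤ F m.castSucc := by
        refine le_trans (hle i) (hmono ?_)
        rw [Fin.le_def]
        simpa using him
      have key : (C m ⊔ (t.erase m).sup C) ⊓ F m.castSucc = (t.erase m).sup C := by
        rw [sup_comm, sup_inf_assoc_of_le _ h1, hdis m, sup_bot_eq]
      have ihm := ih (t.erase m) (Finset.erase_ssubset hmem) i
        (fun h => hi (Finset.mem_of_mem_erase h))
      rw [ht, Finset.sup_insert]
      calc C i ⊓ (C m ⊔ (t.erase m).sup C)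
          = C i ⊓ F m.castSucc ⊓ (C m ⊔ (t.erase m).sup C) := by rw [inf_eq_left.mpr h2]
        _ = C i ⊓ ((C m ⊔ (t.erase m).sup C) ⊓ F m.castSucc) := by
            rw [inf_assoc, inf_comm (F m.castSucc)]
        _ = C i ⊓ (t.erase m).sup C := by rw [key]
        _ = ⊥ := ihm
    · have hsup : t.sup C ≤ F i.castSucc := by
        apply bound
        intro l hl
        have h1 : l ≤ m := t.le_max' l hl
        rw [Fin.le_def] at h1
        have : l ≠ i := fun h => hi (h ▸ hl)
        have : (l : ℕ) ≠ (i : ℕ) := fun h => this (Fin.ext h)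
        simpa using by omega
      have := inf_le_inf_left (C i) hsup
      rw [hdis i] at this
      exact le_bot_iff.mp this

/-- A letter transfers along a linear equivalence. -/
lemma MemLetter.congr {V : Set (ModuleCat.{0} A)} {N N' : Type}
    [AddCommGroup N] [Module A N] [AddCommGroup N'] [Module A N']
    (e : N ≃ₗ[A] N') (h : MemLetter V N') : MemLetter V N := by
  obtain ⟨P, hP, ⟨e'⟩⟩ := h
  exact ⟨P, hP, ⟨e.trans e'⟩⟩

/-- Reordering the factors of a Jordan–Hölder filtration of a semisimple module. -/
lemma reorder (hss : IsSemisimpleModule A M) {u : ℕ} {F : Fin (u+1) → Submodule A M}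
    (hF : IsJHFiltration F) (τ : Equiv.Perm (Fin u)) :
    ∃ G : Fin (u+1) → Submodule A M, IsJHFiltration G ∧
      ∀ j : Fin u, Nonempty (chainFactor G j ≃ₗ[A] chainFactor F (τ j)) := by
  classical
  obtain ⟨hmono, h0, htop, hsimp⟩ := hF
  choose C hCinf hCsup using fun i : Fin u =>
    compl_exists hss (hmono (Fin.castSucc_le_succ i))
  have hCle : ∀ i, C i ≤ F i.succ := fun i => (hCsup i) ▸ le_sup_left
  -- the index finsets
  set s : Fin (u+1) → Finset (Fin u) :=
    fun j => Finset.univ.filter (fun l : Fin u => (l : ℕ) < (j : ℕ)) with hs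
  have hs_mono : ∀ {j j' : Fin (u+1)}, j ≤ j' → s j ⊆ s j' := by
    intro j j' hjj' l hl
    simp only [hs, Finset.mem_filter, Finset.mem_univ, true_and] at hl ⊢
    rw [Fin.le_def] at hjj'
    omega
  have hs_zero : s 0 = ∅ := by
    ext l; simp [hs]
  have hs_last : s (Fin.last u) = Finset.univ := by
    ext l; simp [hs, l.isLt]
  have hs_step : ∀ j : Fin u, s j.succ = insert j (s j.castSucc) := by
    intro j
    ext l
    simp only [hs, Finset.mem_filter, Finset.mem_univ, true_and, Finset.mem_insert,
      Fin.val_succ, Fin.coe_castSucc, Fin.ext_iff]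
    omega
  -- F is the partial sup of the C's
  have hFeq : ∀ j : Fin (u+1), F j = (s j).sup C := by
    intro j
    induction j using Fin.induction with
    | zero => rw [h0, hs_zero, Finset.sup_empty]
    | succ i ihi =>
      rw [hs_step, Finset.sup_insert, ← ihi, hCsup i]
  set G : Fin (u+1) → Submodule A M := fun j => (s j).sup (fun l => C (τ l)) with hG
  have hGim : ∀ j, G j = ((s j).image τ).sup C := by
    intro j
    rw [hG, Finset.sup_image]
    rfl
  have hGstep : ∀ j : Fin u, C (τ j) ⊔ G j.castSucc = G j.succ := by
    intro j
    rw [hG]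
    simp only []
    rw [hs_step, Finset.sup_insert]
  have hGdisj : ∀ j : Fin u, C (τ j) ⊓ G j.castSucc = ⊥ := by
    intro j
    rw [hGim]
    refine disjoint_finsetSup F hmono C hCle hCinf _ _ ?_
    intro hmem
    obtain ⟨l, hl, hlj⟩ := Finset.mem_image.mp hmem
    have : l = j := τ.injective hlj
    subst this
    simp [hs] at hl
  have hiso : ∀ j : Fin u, Nonempty (chainFactor G j ≃ₗ[A] chainFactor F (τ j)) := by
    intro j
    obtain ⟨e1⟩ := quotIso (hGdisj j) (hGstep j)
    obtain ⟨e2⟩ := quotIso (hCinf (τ j)) (hCsup (τ j))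
    exact ⟨e1.trans e2.symm⟩
  refine ⟨G, ⟨?_, ?_, ?_, ?_⟩, hiso⟩
  · intro j j' hjj'
    exact Finset.sup_mono (hs_mono hjj')
  · rw [hG]; simp only []; rw [hs_zero, Finset.sup_empty]
  · rw [hGim, hs_last, Finset.image_univ_equiv, ← hs_last, ← hFeq]
    exact htop
  · intro j
    obtain ⟨e⟩ := hiso j
    haveI := hsimp (τ j)
    exact IsSimpleModule.congr e

end Aux
section Main

/-- One direction for left basic opens. -/
lemma leftOpen_perm (k A : Type) [Field k] [Ring A] [Algebra k A]
    {M : ModuleCat.{0} A} (hss : IsSemisimpleModule A M)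
    (w : Word A) (σ : Equiv.Perm (Fin w.length))
    (w' : Word A) (hw' : w' = List.ofFn fun i => w.get (σ i))
    (hM : M ∈ leftOpen k A w) : M ∈ leftOpen k A w' := by
  subst hw'
  obtain ⟨hfd, u, F, hu, hJH, hmem⟩ := hM
  have hlen : (List.ofFn fun i => w.get (σ i)).length = w.length := List.length_ofFn
  set f : Fin u → Fin u := fun l =>
    if h : (l : ℕ) < w.length then Fin.castLE hu (σ ⟨l, h⟩) else l with hf
  have hinj : Function.Injective f := by
    intro a b hab
    simp only [hf] at hab
    split_ifs at hab with ha hb hb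
    · have hv : ((σ ⟨a, ha⟩ : Fin w.length) : ℕ) = ((σ ⟨b, hb⟩ : Fin w.length) : ℕ) := by
        rw [Fin.ext_iff] at hab; simpa using hab
      have := σ.injective (Fin.ext hv)
      rw [Fin.ext_iff] at this ⊢
      simpa using this
    · exfalso
      rw [Fin.ext_iff] at hab
      have h1 : ((Fin.castLE hu (σ ⟨a, ha⟩) : Fin u) : ℕ) = ((σ ⟨a, ha⟩ : Fin w.length) : ℕ) :=
        rfl
      have h2 := (σ (⟨a, ha⟩ : Fin w.length)).isLt
      omega
    · exfalso
      rw [Fin.ext_iff] at hab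
      have h1 : ((Fin.castLE hu (σ ⟨b, hb⟩) : Fin u) : ℕ) = ((σ ⟨b, hb⟩ : Fin w.length) : ℕ) :=
        rfl
      have h2 := (σ (⟨b, hb⟩ : Fin w.length)).isLt
      omega
    · exact hab
  set τ : Equiv.Perm (Fin u) := Equiv.ofBijective f (Finite.injective_iff_bijective.mp hinj)
    with hτdef
  obtain ⟨G, hG, hiso⟩ := reorder hss hJH τ
  have hu' : (List.ofFn fun i => w.get (σ i)).length ≤ u := hlen.trans_le hu
  refine ⟨hfd, u, G, hu', hG, ?_⟩
  intro i
  set i' : Fin w.length := Fin.cast hlen i with hi'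
  have hcond : ((Fin.castLE hu' i : Fin u) : ℕ) < w.length := by
    have := i.isLt
    simp only [Fin.coe_castLE]
    omega
  have hτ : τ (Fin.castLE hu' i) = Fin.castLE hu (σ i') := by
    show f (Fin.castLE hu' i) = _
    rw [hf]
    simp only []
    rw [dif_pos hcond]
    congr 1
  obtain ⟨e⟩ := hiso (Fin.castLE hu' i)
  rw [hτ] at e
  have hget : (List.ofFn fun j => w.get (σ j)).get i = w.get (σ i') := by
    rw [List.get_ofFn]
  exact hget ▸ MemLetter.congr e (hmem (σ i'))

set_option maxHeartbeats 1600000 in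
/-- One direction for right basic opens. -/
lemma rightOpen_perm (k A : Type) [Field k] [Ring A] [Algebra k A]
    {M : ModuleCat.{0} A} (hss : IsSemisimpleModule A M)
    (w : Word A) (σ : Equiv.Perm (Fin w.length))
    (w' : Word A) (hw' : w' = List.ofFn fun i => w.get (σ i))
    (hM : M ∈ rightOpen k A w) : M ∈ rightOpen k A w' := by
  subst hw'
  obtain ⟨hfd, u, F, hu, hJH, hmem⟩ := hM
  have hlen : (List.ofFn fun i => w.get (σ i)).length = w.length := List.length_ofFn
  set f : Fin u → Fin u := fun l =>
    if h : u - w.length ≤ (l : ℕ) then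
      ⟨u - w.length + ((σ ⟨(l : ℕ) - (u - w.length), by have := l.isLt; omega⟩ :
          Fin w.length) : ℕ),
        by have := (σ (⟨(l : ℕ) - (u - w.length), by have := l.isLt; omega⟩ :
            Fin w.length)).isLt; omega⟩
    else l with hf
  have hinj : Function.Injective f := by
    intro a b hab
    simp only [hf] at hab
    split_ifs at hab with ha hb hb
    · rw [Fin.ext_iff] at hab
      simp only [] at hab
      have hv : ((σ ⟨(a : ℕ) - (u - w.length), by have := a.isLt; omega⟩ : Fin w.length) : ℕ) =
          ((σ ⟨(b : ℕ) - (u - w.length), by have := b.isLt; omega⟩ : Fin w.length) : ℕ) := by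
        omega
      have := σ.injective (Fin.ext hv)
      rw [Fin.ext_iff] at this ⊢
      simp only [] at this
      omega
    · exfalso
      rw [Fin.ext_iff] at hab
      simp only [] at hab
      have := (σ (⟨(a : ℕ) - (u - w.length), by have := a.isLt; omega⟩ : Fin w.length)).isLt
      omega
    · exfalso
      rw [Fin.ext_iff] at hab
      simp only [] at hab
      have := (σ (⟨(b : ℕ) - (u - w.length), by have := b.isLt; omega⟩ : Fin w.length)).isLt
      omega
    · exact hab
  set τ : Equiv.Perm (Fin u) := Equiv.ofBijective f (Finite.injective_iff_bijective.mp hinj)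
    with hτdef
  obtain ⟨G, hG, hiso⟩ := reorder hss hJH τ
  have hu' : (List.ofFn fun i => w.get (σ i)).length ≤ u := hlen.trans_le hu
  refine ⟨hfd, u, G, hu', hG, ?_⟩
  intro i
  set i' : Fin w.length := Fin.cast hlen i with hi'
  set p : Fin u := ⟨u - (List.ofFn fun j => w.get (σ j)).length + i.1,
    by have := i.isLt; omega⟩ with hp
  have hcond : u - w.length ≤ (p : ℕ) := by
    simp only [hp]
    omega
  have hτ : τ p = ⟨u - w.length + ((σ i' : Fin w.length) : ℕ),
      by have := (σ i').isLt; omega⟩ := by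
    show f p = _
    rw [hf]
    simp only []
    rw [dif_pos hcond]
    have hA : (⟨(p : ℕ) - (u - w.length),
        by have := p.isLt; have := i.isLt; omega⟩ : Fin w.length) = i' := by
      apply Fin.ext
      show (p : ℕ) - (u - w.length) = (i' : ℕ)
      have h1 : (p : ℕ) = u - (List.ofFn fun j => w.get (σ j)).length + i.1 := by rw [hp]
      have h2 : (i' : ℕ) = (i : ℕ) := rfl
      have := i.isLt
      omega
    exact Fin.ext (congrArg (fun x : Fin w.length => u - w.length + ((σ x : Fin w.length) : ℕ)) hA)
  obtain ⟨e⟩ := hiso p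
  rw [hτ] at e
  have hget : (List.ofFn fun j => w.get (σ j)).get i = w.get (σ i') := by
    rw [List.get_ofFn]
  have hmem' := hmem (σ i')
  have hpos : (⟨u - w.length + ((σ i' : Fin w.length) : ℕ),
      by have := (σ i').isLt; omega⟩ : Fin u) =
      ⟨u - w.length + (σ i').1, by have := (σ i').isLt; omega⟩ := rfl
  exact hget ▸ MemLetter.congr e hmem'

/-- Inverting the permutation relation between words. -/
lemma perm_symm {α : Type*} (w w' : List α) (σ : Equiv.Perm (Fin w.length))
    (hw' : w' = List.ofFn fun i => w.get (σ i)) :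
    ∃ σ' : Equiv.Perm (Fin w'.length), w = List.ofFn fun i => w'.get (σ' i) := by
  subst hw'
  have hlen : (List.ofFn fun i => w.get (σ i)).length = w.length := List.length_ofFn
  refine ⟨(finCongr hlen).trans (σ.symm.trans (finCongr hlen.symm)), ?_⟩
  apply List.ext_get
  · simp
  intro n h1 h2
  simp only [List.get_ofFn, Equiv.trans_apply, finCongr_apply]
  congr 1
  apply Fin.ext
  simp
  rfl
end Main
/-- For a finite-dimensional semisimple module `M` and a word `w'`
obtained from `w` by a permutation `σ` of its letters, `M ∈ 𝒪^l_w ↔ M ∈ 𝒪^l_{w'}` and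
`M ∈ 𝒪^r_w ↔ M ∈ 𝒪^r_{w'}`: the induced non-commutative topology on semisimple
representations is commutative. -/
theorem semisimple_membership_perm (k A : Type) [Field k] [IsAlgClosed k]
    [Ring A] [Algebra k A] [Algebra.FiniteType k A]
    (M : ModuleCat.{0} A) (hfd : M ∈ FDRep k A) (hss : IsSemisimpleModule A M)
    (w : Word A) (hw : ∀ V ∈ w, V ⊆ SimpFD k A)
    (σ : Equiv.Perm (Fin w.length))
    (w' : Word A) (hw' : w' = List.ofFn fun i => w.get (σ i)) :
    (M ∈ leftOpen k A w ↔ M ∈ leftOpen k A w') ∧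
    (M ∈ rightOpen k A w ↔ M ∈ rightOpen k A w') := by
  obtain ⟨σ', hσ'⟩ := perm_symm w w' σ hw'
  exact ⟨⟨leftOpen_perm k A hss w σ w' hw', leftOpen_perm k A hss w' σ' w hσ'⟩,
    ⟨rightOpen_perm k A hss w σ w' hw', rightOpen_perm k A hss w' σ' w hσ'⟩⟩

end NCT
end
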